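/- Let K be the uniform kernel K(u) = (1/2)·1{|u| ≤ 1}, h > 0, and Kₕ(t) = K(t/h)/h. Let X₁,…,Xₙ ∈ ℝ be design points such that there exist indices i₁, i₂, i₃ with |X_{i₂} − X_{i₁}| ≤ h, |X_{i₃} − X_{i₂}| ≤ h, and |X_{i₃} − X_{i₁}| > h. Then: (a) the 3×3 principal minor of the Gram matrix 𝕂 = [Kₕ(Xᵢ − Xⱼ)]ᵢⱼ on rows and columns (i₁, i₂, i₃) has strictly negative determinant, equal to −Kₕ(0)³, so 𝕂 is not positive semidefinite; and (b) the largest singular value of I − S, where S = D𝕂 is the Nadaraya–Watson smoothing matrix with D diagonal, Dᵢᵢ = 1/Σₗ Kₕ(Xᵢ − Xₗ), is strictly greater than 1. -/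

import Mathlib

open Matrix

/-- **The uniform kernel yields a non-PSD Gram matrix and a large singular value of `I−S`.**
For the uniform kernel `K(u) = (1/2)·1{|u| ≤ 1}` with bandwidth `h > 0`,
`Kₕ(t) = K(t/h)/h`, if three design points satisfy `|X_{i₂}−X_{i₁}| ≤ h`,
`|X_{i₃}−X_{i₂}| ≤ h` and `|X_{i₃}−X_{i₁}| > h`, then (a) the principal `3×3` minor of
the Gram matrix `𝕂 = [Kₕ(Xᵢ−Xⱼ)]` on rows and columns `(i₁,i₂,i₃)` has determinant
`−Kₕ(0)³ < 0`, so `𝕂` is not positive semidefinite, and (b) the largest singular value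
(operator norm) of `I − S`, with `S = D𝕂` the Nadaraya–Watson smoothing matrix, exceeds 1. -/
theorem uniform_kernel_not_psd_and_singular_value_gt_one
    {n : ℕ} (h : ℝ) (hh : 0 < h)
    (Kh : ℝ → ℝ) (hKh : ∀ t, Kh t = (if |t / h| ≤ 1 then (1 : ℝ) / 2 else 0) / h)
    (X : Fin n → ℝ) (i₁ i₂ i₃ : Fin n)
    (h12 : |X i₂ - X i₁| ≤ h) (h23 : |X i₃ - X i₂| ≤ h) (h13 : h < |X i₃ - X i₁|)
    (𝕂 : Matrix (Fin n) (Fin n) ℝ) (hKmat : 𝕂 = Matrix.of fun i j => Kh (X i - X j))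
    (S : Matrix (Fin n) (Fin n) ℝ)
    (hS : S = Matrix.diagonal (fun i => (∑ l, 𝕂 i l)⁻¹) * 𝕂) :
    (𝕂.submatrix ![i₁, i₂, i₃] ![i₁, i₂, i₃]).det = -(Kh 0) ^ 3 ∧
    (𝕂.submatrix ![i₁, i₂, i₃] ![i₁, i₂, i₃]).det < 0 ∧
    ¬ 𝕂.PosSemidef ∧
    1 < ‖Matrix.toEuclideanCLM (𝕜 := ℝ) (n := Fin n)
        ((1 : Matrix (Fin n) (Fin n) ℝ) - S)‖ := by
  have hκ : Kh 0 = 1 / 2 / h := by rw [hKh]; simp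
  have hκpos : 0 < Kh 0 := by rw [hκ]; positivity
  have hent : ∀ i j, 𝕂 i j = if |X i - X j| ≤ h then Kh 0 else 0 := by
    intro i j
    rw [hKmat]
    show Kh (X i - X j) = _
    rw [hKh, hκ, abs_div, abs_of_pos hh]
    by_cases hc : |X i - X j| ≤ h
    · rw [if_pos ((div_le_one hh).mpr hc), if_pos hc]
    · rw [if_neg (fun hle => hc ((div_le_one hh).mp hle)), if_neg hc, zero_div]
  have hdiag : ∀ i, 𝕂 i i = Kh 0 := by
    intro i; rw [hent]; simp [hh.le]
  have e12 : 𝕂 i₁ i₂ = Kh 0 := by rw [hent, if_pos]; rwa [abs_sub_comm]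
  have e21 : 𝕂 i₂ i₁ = Kh 0 := by rw [hent, if_pos h12]
  have e23 : 𝕂 i₂ i₃ = Kh 0 := by rw [hent, if_pos]; rwa [abs_sub_comm]
  have e32 : 𝕂 i₃ i₂ = Kh 0 := by rw [hent, if_pos h23]
  have e31 : 𝕂 i₃ i₁ = 0 := by rw [hent, if_neg (not_le.mpr h13)]
  have e13 : 𝕂 i₁ i₃ = 0 := by
    rw [hent, if_neg]; rw [abs_sub_comm]; exact not_le.mpr h13
  have hdet : (𝕂.submatrix ![i₁, i₂, i₃] ![i₁, i₂, i₃]).det = -(Kh 0) ^ 3 := by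
    rw [Matrix.det_fin_three]
    simp only [Matrix.submatrix_apply, Matrix.cons_val', Matrix.cons_val_zero,
      Matrix.cons_val_one, Matrix.head_cons, Matrix.cons_val_two, Matrix.tail_cons,
      Matrix.head_fin_const, Matrix.empty_val', Matrix.cons_val_fin_one]
    rw [hdiag, hdiag, hdiag, e12, e21, e13, e23, e31, e32]
    ring
  -- the test vector
  set v : Fin n → ℝ := Pi.single i₁ 1 - Pi.single i₂ 1 + Pi.single i₃ 1 with hv
  have hw : ∀ i, (𝕂 *ᵥ v) i = 𝕂 i i₁ - 𝕂 i i₂ + 𝕂 i i₃ := by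
    intro i
    simp [hv, Matrix.mulVec_add, Matrix.mulVec_sub, Matrix.mulVec_single]
  have hw1 : (𝕂 *ᵥ v) i₁ = 0 := by rw [hw, hdiag, e12, e13]; ring
  have hw2 : (𝕂 *ᵥ v) i₂ = Kh 0 := by rw [hw, e21, hdiag, e23]; ring
  have hw3 : (𝕂 *ᵥ v) i₃ = 0 := by rw [hw, e31, e32, hdiag]; ring
  have hdp : ∀ u : Fin n → ℝ, v ⬝ᵥ u = u i₁ - u i₂ + u i₃ := by
    intro u
    simp [hv, add_dotProduct, sub_dotProduct, single_dotProduct]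
  have hnpsd : ¬ 𝕂.PosSemidef := by
    intro hP
    have h0 := hP.dotProduct_mulVec_nonneg v
    rw [star_trivial, hdp, hw1, hw2, hw3] at h0
    linarith
  refine ⟨hdet, by rw [hdet]; have := pow_pos hκpos 3; linarith, hnpsd, ?_⟩
  -- part (b)
  have hnn : ∀ i j, 0 ≤ 𝕂 i j := by
    intro i j; rw [hent]; split
    · exact hκpos.le
    · exact le_refl 0
  have hd2 : 0 < (∑ l, 𝕂 i₂ l)⁻¹ := by
    refine inv_pos.mpr (lt_of_lt_of_le hκpos ?_)
    have := Finset.single_le_sum (f := fun l => 𝕂 i₂ l) (fun i _ => hnn i₂ i)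
      (Finset.mem_univ i₂)
    simpa [hdiag] using this
  have hu : ∀ i, (S *ᵥ v) i = (∑ l, 𝕂 i l)⁻¹ * (𝕂 *ᵥ v) i := by
    intro i
    rw [hS, ← Matrix.mulVec_mulVec, Matrix.mulVec_diagonal]
  have hvu : v ⬝ᵥ (S *ᵥ v) = -((∑ l, 𝕂 i₂ l)⁻¹ * Kh 0) := by
    rw [hdp, hu, hu, hu, hw1, hw2, hw3]; ring
  -- move to Euclidean space
  set x : EuclideanSpace ℝ (Fin n) := (WithLp.equiv 2 (Fin n → ℝ)).symm v with hx
  set z : EuclideanSpace ℝ (Fin n) := (WithLp.equiv 2 (Fin n → ℝ)).symm (S *ᵥ v) with hz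
  have hT : Matrix.toEuclideanCLM (𝕜 := ℝ) (n := Fin n)
      ((1 : Matrix (Fin n) (Fin n) ℝ) - S) x = x - z := by
    rw [hx, hz]
    show WithLp.toLp 2 (((1 : Matrix (Fin n) (Fin n) ℝ) - S) *ᵥ v) = _
    rw [Matrix.sub_mulVec, Matrix.one_mulVec]
    rfl
  have hinner : inner ℝ x z = -((∑ l, 𝕂 i₂ l)⁻¹ * Kh 0) := by
    rw [← hvu]
    rw [PiLp.inner_apply]
    simp [dotProduct, hx, hz, mul_comm]
  have hsq : ‖x‖ ^ 2 < ‖x - z‖ ^ 2 := by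
    rw [@norm_sub_sq_real, hinner]
    have hz2 : (0:ℝ) ≤ ‖z‖ ^ 2 := by positivity
    nlinarith [mul_pos hd2 hκpos]
  have hxpos : 0 < ‖x‖ := by
    refine norm_pos_iff.mpr (fun hx0 => ?_)
    have hv2 : v i₂ = -1 := by
      have hne1 : i₂ ≠ i₁ := by
        intro he
        rw [he] at h23
        exact absurd h13 (not_lt.mpr h23)
      have hne3 : i₂ ≠ i₃ := by
        intro he
        rw [← he] at h13
        exact absurd h13 (not_lt.mpr h12)
      simp [hv, Pi.single_eq_of_ne hne1, Pi.single_eq_of_ne hne3]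
    have : x i₂ = v i₂ := rfl
    rw [hx0] at this
    rw [hv2] at this
    norm_num at this
  have hlt : ‖x‖ < ‖x - z‖ :=
    lt_of_pow_lt_pow_left₀ 2 (norm_nonneg _) hsq
  have hle := (Matrix.toEuclideanCLM (𝕜 := ℝ) (n := Fin n)
      ((1 : Matrix (Fin n) (Fin n) ℝ) - S)).le_opNorm x
  rw [hT] at hle
  have : 1 * ‖x‖ < ‖Matrix.toEuclideanCLM (𝕜 := ℝ) (n := Fin n)
      ((1 : Matrix (Fin n) (Fin n) ℝ) - S)‖ * ‖x‖ := by
    rw [one_mul]; exact lt_of_lt_of_le hlt hle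
  exact lt_of_mul_lt_mul_right this (norm_nonneg x)
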